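/- Fix an integer K ≥ 1 and set λ_k = c_λ K^{(p−2)/2} for all 0 ≤ k < K. Then min_{0 ≤ i < K} ‖∇f(x_i)‖ ≤ (c_λ^{1/p}/√K) · (2Δ + L (L/c_λ)^{2/(p−2)})^{(p−1)/p}. -/

import Mathlib

open scoped Classical
open RealInnerProductSpace

theorem descent_lemma
    {E : Type*} [NormedAddCommGroup E] [InnerProductSpace ℝ E] [CompleteSpace E]
    (f : E → ℝ) (f' : E → E)
    (hf : ∀ y, HasGradientAt f (f' y) y)
    (L : ℝ)
    (hlip : ∀ y z, ‖f' y - f' z‖ ≤ L * ‖y - z‖)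
    (x v : E) :
    f (x + v) ≤ f x + ⟪f' x, v⟫ + L / 2 * ‖v‖ ^ 2 := by
  set φ : ℝ → ℝ := fun t => f (x + t • v) - t * ⟪f' x, v⟫ - L / 2 * t ^ 2 * ‖v‖ ^ 2 with hφ
  have hderiv : ∀ t : ℝ, HasDerivAt φ
      (⟪f' (x + t • v), v⟫ - ⟪f' x, v⟫ - L * t * ‖v‖ ^ 2) t := by
    intro t
    have hcurve : HasDerivAt (fun t : ℝ => x + t • v) v t := by
      simpa using ((hasDerivAt_id t).smul_const v).const_add x
    have h1 : HasDerivAt (fun t : ℝ => f (x + t • v)) ⟪f' (x + t • v), v⟫ t := by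
      have := (hf (x + t • v)).hasFDerivAt.comp_hasDerivAt t hcurve
      simpa [InnerProductSpace.toDual_apply_apply, Function.comp_def] using this
    have h2 : HasDerivAt (fun t : ℝ => t * ⟪f' x, v⟫) ⟪f' x, v⟫ t := by
      simpa using (hasDerivAt_id t).mul_const ⟪f' x, v⟫
    have h3 : HasDerivAt (fun t : ℝ => L / 2 * t ^ 2 * ‖v‖ ^ 2) (L * t * ‖v‖ ^ 2) t := by
      have : HasDerivAt (fun t : ℝ => t ^ 2) (2 * t) t := by
        simpa using hasDerivAt_pow 2 t
      have := (this.const_mul (L / 2)).mul_const (‖v‖ ^ 2)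
      rw [show L * t * ‖v‖ ^ 2 = L / 2 * (2 * t) * ‖v‖ ^ 2 by ring]
      exact this
    exact (h1.sub h2).sub h3
  have hmono : AntitoneOn φ (Set.Icc 0 1) := by
    apply antitoneOn_of_deriv_nonpos (convex_Icc 0 1)
    · exact fun t _ => (hderiv t).continuousAt.continuousWithinAt
    · exact fun t _ => ((hderiv t).differentiableAt).differentiableWithinAt
    · intro t ht
      rw [(hderiv t).deriv]
      rw [interior_Icc] at ht
      have hinner : ⟪f' (x + t • v), v⟫ - ⟪f' x, v⟫ ≤ L * t * ‖v‖ ^ 2 := by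
        have h1 : ⟪f' (x + t • v) - f' x, v⟫ ≤ ‖f' (x + t • v) - f' x‖ * ‖v‖ :=
          real_inner_le_norm _ _
        have h2 : ‖f' (x + t • v) - f' x‖ ≤ L * (t * ‖v‖) := by
          have := hlip (x + t • v) x
          simpa [norm_smul, abs_of_pos ht.1, mul_assoc] using this
        calc ⟪f' (x + t • v), v⟫ - ⟪f' x, v⟫
            = ⟪f' (x + t • v) - f' x, v⟫ := by rw [inner_sub_left]
          _ ≤ ‖f' (x + t • v) - f' x‖ * ‖v‖ := h1
          _ ≤ L * (t * ‖v‖) * ‖v‖ := by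
              apply mul_le_mul_of_nonneg_right h2 (norm_nonneg v)
          _ = L * t * ‖v‖ ^ 2 := by ring
      linarith
  have := hmono (Set.left_mem_Icc.mpr zero_le_one) (Set.right_mem_Icc.mpr zero_le_one)
    zero_le_one
  simp only [hφ] at this
  simp only [one_smul, zero_smul, add_zero, zero_mul, zero_pow, sub_zero, one_mul, one_pow,
    mul_one] at this
  linarith

set_option maxHeartbeats 1000000 in
/-- Fixed-horizon rate with `λ_k = c_λ K^{(p-2)/2}` for `0 ≤ k < K`:
`min_{0 ≤ i < K} ‖∇f(x_i)‖ ≤ (c_λ^{1/p}/√K) (2Δ + L (L/c_λ)^{2/(p-2)})^{(p-1)/p}`. -/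
theorem hor_gd_rate_fixed_horizon
    {E : Type*} [NormedAddCommGroup E] [InnerProductSpace ℝ E] [CompleteSpace E]
    (f : E → ℝ) (f' : E → E)
    (hf : ∀ y, HasGradientAt f (f' y) y)
    (L : ℝ) (hL : 0 < L)
    (hlip : ∀ y z, ‖f' y - f' z‖ ≤ L * ‖y - z‖)
    (hbdd : BddBelow (Set.range f))
    (p : ℝ) (hp : 2 < p)
    (c : ℝ) (hc : 0 < c)
    (K : ℕ) (hK : 1 ≤ K)
    (lam : ℕ → ℝ) (hlam : ∀ k < K, lam k = c * (K : ℝ) ^ ((p - 2) / 2))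
    (x s : ℕ → E)
    (hs : ∀ k, s k = if f' (x k) = 0 then 0
      else -((lam k * ‖f' (x k)‖ ^ (p - 2)) ^ (-(1 : ℝ) / (p - 1))) • f' (x k))
    (hx : ∀ k, x (k + 1) = x k + s k)
    (Δ : ℝ) (hΔ : Δ = f (x 0) - ⨅ y, f y) :
    (Finset.range K).inf' (Finset.nonempty_range_iff.mpr (by omega))
        (fun i => ‖f' (x i)‖) ≤
      c ^ ((1 : ℝ) / p) / Real.sqrt K *
        (2 * Δ + L * (L / c) ^ (2 / (p - 2))) ^ ((p - 1) / p) := by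
  have hp2 : (0:ℝ) < p - 2 := by linarith
  have hp1 : (0:ℝ) < p - 1 := by linarith
  have hp0 : (0:ℝ) < p := by linarith
  have hK0 : (0:ℝ) < (K:ℝ) := by exact_mod_cast hK
  set lam0 : ℝ := c * (K:ℝ) ^ ((p - 2) / 2) with hlam0
  have hlam0pos : 0 < lam0 := mul_pos hc (Real.rpow_pos_of_pos hK0 _)
  have hΔ0 : 0 ≤ Δ := by
    rw [hΔ]
    exact sub_nonneg.mpr (ciInf_le hbdd (x 0))
  set m : ℝ := (Finset.range K).inf' (Finset.nonempty_range_iff.mpr (by omega))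
      (fun i => ‖f' (x i)‖) with hm
  have hm0 : 0 ≤ m := Finset.le_inf' _ _ (fun i _ => norm_nonneg _)
  set T : ℝ := L ^ ((p-1)/(p-2)) * c ^ (-(1:ℝ)/(p-2)) * (K:ℝ) ^ (-(1:ℝ)/2) with hT
  have hTpos : 0 < T :=
    mul_pos (mul_pos (Real.rpow_pos_of_pos hL _) (Real.rpow_pos_of_pos hc _))
      (Real.rpow_pos_of_pos hK0 _)
  have hW0 : 0 ≤ L * (L / c) ^ (2 / (p - 2)) :=
    mul_nonneg hL.le (Real.rpow_nonneg (div_nonneg hL.le hc.le) _)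
  have hsqrtK : Real.sqrt K = (K:ℝ) ^ ((1:ℝ)/2) := Real.sqrt_eq_rpow _
  have hcfac : (0:ℝ) ≤ c ^ ((1:ℝ)/p) / Real.sqrt K :=
    div_nonneg (Real.rpow_nonneg hc.le _) (Real.sqrt_nonneg _)
  -- Fact A : T ≤ RHS
  have hrhsA : T ≤ c ^ ((1:ℝ)/p) / Real.sqrt K *
      (2 * Δ + L * (L / c) ^ (2 / (p - 2))) ^ ((p - 1) / p) := by
    have key : T = c ^ ((1:ℝ)/p) / Real.sqrt K *
        (L * (L / c) ^ (2 / (p - 2))) ^ ((p - 1) / p) := by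
      have hLc : (0:ℝ) ≤ L / c := div_nonneg hL.le hc.le
      rw [hsqrtK]
      symm
      calc c ^ ((1:ℝ)/p) / (K:ℝ) ^ ((1:ℝ)/2) * (L * (L / c) ^ (2 / (p - 2))) ^ ((p - 1) / p)
          = c ^ ((1:ℝ)/p) / (K:ℝ) ^ ((1:ℝ)/2) *
            (L ^ ((p-1)/p) * (L / c) ^ (2 / (p - 2) * ((p-1)/p))) := by
            rw [Real.mul_rpow hL.le (Real.rpow_nonneg hLc _), ← Real.rpow_mul hLc]
        _ = c ^ ((1:ℝ)/p) / (K:ℝ) ^ ((1:ℝ)/2) *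
            (L ^ ((p-1)/p) * (L ^ (2 / (p - 2) * ((p-1)/p)) / c ^ (2 / (p - 2) * ((p-1)/p)))) := by
            rw [Real.div_rpow hL.le hc.le]
        _ = L ^ ((p-1)/p) * L ^ (2 / (p - 2) * ((p-1)/p)) *
            (c ^ ((1:ℝ)/p) * (c ^ (2 / (p - 2) * ((p-1)/p)))⁻¹) * ((K:ℝ) ^ ((1:ℝ)/2))⁻¹ := by
            ring
        _ = L ^ ((p-1)/p + 2 / (p - 2) * ((p-1)/p)) *
            (c ^ ((1:ℝ)/p) * c ^ (-(2 / (p - 2) * ((p-1)/p)))) * (K:ℝ) ^ (-((1:ℝ)/2)) := by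
            rw [← Real.rpow_add hL, ← Real.rpow_neg hc.le, ← Real.rpow_neg hK0.le]
        _ = L ^ ((p-1)/p + 2 / (p - 2) * ((p-1)/p)) *
            c ^ ((1:ℝ)/p + -(2 / (p - 2) * ((p-1)/p))) * (K:ℝ) ^ (-((1:ℝ)/2)) := by
            rw [← Real.rpow_add hc]
        _ = T := by
            rw [hT,
              show (p-1)/p + 2 / (p - 2) * ((p-1)/p) = (p-1)/(p-2) by
                field_simp; ring,
              show (1:ℝ)/p + -(2 / (p - 2) * ((p-1)/p)) = -1/(p-2) by
                field_simp; ring,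
              show -((1:ℝ)/2) = -1/2 by ring]
    rw [key]
    apply mul_le_mul_of_nonneg_left _ hcfac
    apply Real.rpow_le_rpow hW0 (by linarith) (by positivity)
  -- Fact B : the sum bound conclusion is ≤ RHS
  have hrhsB : (2 * Δ) ^ ((p-1)/p) * c ^ ((1:ℝ)/p) * (K:ℝ) ^ (-(1:ℝ)/2) ≤
      c ^ ((1:ℝ)/p) / Real.sqrt K *
      (2 * Δ + L * (L / c) ^ (2 / (p - 2))) ^ ((p - 1) / p) := by
    have h1 : (2 * Δ) ^ ((p-1)/p) ≤ (2 * Δ + L * (L / c) ^ (2 / (p - 2))) ^ ((p - 1) / p) :=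
      Real.rpow_le_rpow (by linarith) (by linarith) (by positivity)
    have h2 : (K:ℝ) ^ (-(1:ℝ)/2) = 1 / Real.sqrt K := by
      rw [hsqrtK, neg_div, Real.rpow_neg hK0.le]
      exact (one_div _).symm
    rw [h2]
    calc (2 * Δ) ^ ((p-1)/p) * c ^ ((1:ℝ)/p) * (1 / Real.sqrt K)
        = c ^ ((1:ℝ)/p) / Real.sqrt K * (2 * Δ) ^ ((p-1)/p) := by ring
      _ ≤ _ := mul_le_mul_of_nonneg_left h1 hcfac
  by_cases hcase : ∃ i < K, ‖f' (x i)‖ ≤ T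
  · obtain ⟨i, hi, hle⟩ := hcase
    exact le_trans (le_trans (Finset.inf'_le _ (Finset.mem_range.mpr hi)) hle) hrhsA
  · push_neg at hcase
    -- per-step decrease
    have step : ∀ k < K,
        1/2 * (lam0 ^ (-(1:ℝ)/(p-1)) * m ^ (p/(p-1))) ≤ f (x k) - f (x (k+1)) := by
      intro k hk
      have hgT : T < ‖f' (x k)‖ := hcase k hk
      have hgpos : 0 < ‖f' (x k)‖ := lt_trans hTpos hgT
      have hg : f' (x k) ≠ 0 := by
        intro h; rw [h] at hgpos; simp at hgpos
      set g : E := f' (x k) with hgdef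
      set η : ℝ := (lam0 * ‖g‖ ^ (p-2)) ^ (-(1:ℝ)/(p-1)) with hη
      have hbpos : 0 < lam0 * ‖g‖ ^ (p-2) :=
        mul_pos hlam0pos (Real.rpow_pos_of_pos hgpos _)
      have hηpos : 0 < η := Real.rpow_pos_of_pos hbpos _
      -- η ≤ 1/L
      have hηL : η * L ≤ 1 := by
        have hTp : T ^ (p-2) = L ^ (p-1) * c⁻¹ * (K:ℝ) ^ (-((p-2)/2)) := by
          rw [hT, Real.mul_rpow (by positivity) (by positivity),
            Real.mul_rpow (by positivity) (by positivity),
            ← Real.rpow_mul hL.le, ← Real.rpow_mul hc.le, ← Real.rpow_mul hK0.le,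
            show (p-1)/(p-2)*(p-2) = p-1 from div_mul_cancel₀ _ hp2.ne',
            show (-1:ℝ)/(p-2)*(p-2) = -1 from div_mul_cancel₀ _ hp2.ne',
            show (-1:ℝ)/2*(p-2) = -((p-2)/2) by ring,
            Real.rpow_neg_one]
        have hmono : T ^ (p-2) < ‖g‖ ^ (p-2) :=
          Real.rpow_lt_rpow hTpos.le hgT hp2
        have hLb : L ^ (p-1) ≤ lam0 * ‖g‖ ^ (p-2) := by
          have : lam0 * T ^ (p-2) ≤ lam0 * ‖g‖ ^ (p-2) :=
            mul_le_mul_of_nonneg_left hmono.le hlam0pos.le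
          refine le_trans (le_of_eq ?_) this
          rw [hTp, hlam0]
          rw [show c * (K:ℝ) ^ ((p-2)/2) * (L ^ (p-1) * c⁻¹ * (K:ℝ) ^ (-((p-2)/2)))
            = L ^ (p-1) * (c * c⁻¹) * ((K:ℝ) ^ ((p-2)/2) * (K:ℝ) ^ (-((p-2)/2))) by ring]
          rw [mul_inv_cancel₀ (ne_of_gt hc), ← Real.rpow_add hK0]
          simp
        have : η ≤ (L ^ (p-1)) ^ (-(1:ℝ)/(p-1)) :=
          Real.rpow_le_rpow_of_nonpos (by positivity) hLb
            (by rw [neg_div]; exact neg_nonpos.mpr (by positivity))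
        have hLinv : (L ^ (p-1)) ^ (-(1:ℝ)/(p-1)) = L⁻¹ := by
          rw [← Real.rpow_mul hL.le, mul_div_assoc', mul_neg_one,
            neg_div, div_self (ne_of_gt hp1), Real.rpow_neg_one]
        rw [hLinv] at this
        calc η * L ≤ L⁻¹ * L := mul_le_mul_of_nonneg_right this hL.le
          _ = 1 := inv_mul_cancel₀ (ne_of_gt hL)
      -- descent
      have hdesc : f (x (k+1)) ≤ f (x k) - η * ‖g‖^2 + L/2 * (η^2 * ‖g‖^2) := by
        have hsk : s k = -η • g := by
          rw [hs k, if_neg hg, hlam k hk]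
        have := descent_lemma f f' hf L hlip (x k) (s k)
        rw [← hx k] at this
        rw [hsk] at this
        have e1 : ⟪g, (-η) • g⟫ = -η * ‖g‖^2 := by
          rw [real_inner_smul_right, real_inner_self_eq_norm_sq]
        have e2 : ‖(-η) • g‖^2 = η^2 * ‖g‖^2 := by
          rw [norm_smul]
          simp [abs_of_pos hηpos, mul_pow]
        rw [e1, e2] at this
        linarith
      have hhalf : f (x (k+1)) ≤ f (x k) - 1/2 * (η * ‖g‖^2) := by
        nlinarith [sq_nonneg ‖g‖, mul_nonneg (mul_nonneg hηpos.le hηpos.le) (sq_nonneg ‖g‖)]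
      -- η * ‖g‖^2 = lam0^{-1/(p-1)} * ‖g‖^{p/(p-1)}
      have hηg : η * ‖g‖^2 = lam0 ^ (-(1:ℝ)/(p-1)) * ‖g‖ ^ (p/(p-1)) := by
        rw [hη, Real.mul_rpow hlam0pos.le (by positivity), ← Real.rpow_mul (norm_nonneg g)]
        rw [mul_assoc]
        congr 1
        rw [show (‖g‖:ℝ)^2 = ‖g‖ ^ (2:ℝ) by rw [Real.rpow_two],
          ← Real.rpow_add hgpos]
        congr 1
        field_simp
        ring
      have hgm : lam0 ^ (-(1:ℝ)/(p-1)) * m ^ (p/(p-1)) ≤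
          lam0 ^ (-(1:ℝ)/(p-1)) * ‖g‖ ^ (p/(p-1)) := by
        apply mul_le_mul_of_nonneg_left _ (Real.rpow_nonneg hlam0pos.le _)
        exact Real.rpow_le_rpow hm0 (Finset.inf'_le _ (Finset.mem_range.mpr hk))
          (by positivity)
      rw [hηg] at hhalf
      linarith
    -- telescoping
    have htel : (K:ℝ) * (1/2 * (lam0 ^ (-(1:ℝ)/(p-1)) * m ^ (p/(p-1)))) ≤ Δ := by
      have hsum : ∑ k ∈ Finset.range K, (f (x k) - f (x (k+1))) = f (x 0) - f (x K) :=
        Finset.sum_range_sub' (fun k => f (x k)) K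
      have hlow : (K:ℝ) * (1/2 * (lam0 ^ (-(1:ℝ)/(p-1)) * m ^ (p/(p-1)))) ≤
          ∑ k ∈ Finset.range K, (f (x k) - f (x (k+1))) := by
        have := Finset.card_nsmul_le_sum (Finset.range K)
          (fun k => f (x k) - f (x (k+1)))
          (1/2 * (lam0 ^ (-(1:ℝ)/(p-1)) * m ^ (p/(p-1))))
          (fun k hk => step k (Finset.mem_range.mp hk))
        simpa [Finset.card_range, nsmul_eq_mul] using this
      have hinf : f (x 0) - f (x K) ≤ Δ := by
        rw [hΔ]
        have := ciInf_le hbdd (x K)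
        linarith
      linarith [hsum ▸ hlow]
    -- extract bound on m
    have hM : m ^ (p/(p-1)) ≤ 2 * Δ * lam0 ^ ((1:ℝ)/(p-1)) / K := by
      set A : ℝ := lam0 ^ ((1:ℝ)/(p-1)) with hA
      have hApos : 0 < A := Real.rpow_pos_of_pos hlam0pos _
      have hinv : lam0 ^ (-(1:ℝ)/(p-1)) = A⁻¹ := by
        rw [hA, neg_div, Real.rpow_neg hlam0pos.le]
      rw [hinv] at htel
      have hrw : m ^ (p/(p-1)) =
          ((K:ℝ) * (1/2 * (A⁻¹ * m ^ (p/(p-1))))) * (2 * A / K) := by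
        field_simp
      rw [hrw]
      calc ((K:ℝ) * (1/2 * (A⁻¹ * m ^ (p/(p-1))))) * (2 * A / K)
          ≤ Δ * (2 * A / K) := by
            apply mul_le_mul_of_nonneg_right htel (by positivity)
        _ = 2 * Δ * A / (K:ℝ) := by ring
    -- m ≤ (2Δ A / K)^{(p-1)/p}
    have hm_le : m ≤ (2 * Δ * lam0 ^ ((1:ℝ)/(p-1)) / K) ^ ((p-1)/p) := by
      have h1 : m = (m ^ (p/(p-1))) ^ ((p-1)/p) := by
        rw [← Real.rpow_mul hm0,
          show p/(p-1)*((p-1)/p) = (1:ℝ) by field_simp, Real.rpow_one]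
      rw [h1]
      exact Real.rpow_le_rpow (Real.rpow_nonneg hm0 _) hM (by positivity)
    -- expand the rpow
    have hexp : (2 * Δ * lam0 ^ ((1:ℝ)/(p-1)) / K) ^ ((p-1)/p) =
        (2 * Δ) ^ ((p-1)/p) * c ^ ((1:ℝ)/p) * (K:ℝ) ^ (-(1:ℝ)/2) := by
      calc (2 * Δ * lam0 ^ ((1:ℝ)/(p-1)) / K) ^ ((p-1)/p)
          = (2*Δ) ^ ((p-1)/p) * (lam0 ^ ((1:ℝ)/(p-1))) ^ ((p-1)/p) / (K:ℝ) ^ ((p-1)/p) := by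
            rw [Real.div_rpow (by positivity) hK0.le,
              Real.mul_rpow (by positivity) (by positivity)]
        _ = (2*Δ) ^ ((p-1)/p) * lam0 ^ ((1:ℝ)/p) / (K:ℝ) ^ ((p-1)/p) := by
            rw [← Real.rpow_mul hlam0pos.le,
              show (1:ℝ)/(p-1)*((p-1)/p) = 1/p by field_simp]
        _ = (2*Δ) ^ ((p-1)/p) * (c ^ ((1:ℝ)/p) * (K:ℝ) ^ ((p-2)/2*((1:ℝ)/p))) /
            (K:ℝ) ^ ((p-1)/p) := by
            rw [hlam0, Real.mul_rpow hc.le (by positivity), ← Real.rpow_mul hK0.le]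
        _ = (2*Δ) ^ ((p-1)/p) * c ^ ((1:ℝ)/p) *
            ((K:ℝ) ^ ((p-2)/2*((1:ℝ)/p)) * ((K:ℝ) ^ ((p-1)/p))⁻¹) := by ring
        _ = (2*Δ) ^ ((p-1)/p) * c ^ ((1:ℝ)/p) *
            (K:ℝ) ^ ((p-2)/2*((1:ℝ)/p) + -((p-1)/p)) := by
            rw [← Real.rpow_neg hK0.le, ← Real.rpow_add hK0]
        _ = (2 * Δ) ^ ((p-1)/p) * c ^ ((1:ℝ)/p) * (K:ℝ) ^ (-(1:ℝ)/2) := by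
            rw [show (p-2)/2*((1:ℝ)/p) + -((p-1)/p) = -(1:ℝ)/2 by field_simp; ring]
    rw [hexp] at hm_le
    exact le_trans hm_le hrhsB
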